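/- Let r, s ∈ (0,1], let R and S be unbiased qubit observables with Bloch vectors of norms r and s respectively, and let G^1 = (G^1_{σ,τ})_{σ,τ∈{+1,−1}} be the rank-1 informationally complete unbiased qubit POVM G^1_{σ,τ} = ¼(I + a⃗_{σ,τ}·σ⃗) with a⃗_{+1,+1} = (1/√3)(1,1,1), a⃗_{+1,−1} = (1/√3)(1,−1,−1), a⃗_{−1,+1} = (1/√3)(−1,−1,1), and a⃗_{−1,−1} = (1/√3)(−1,1,−1). Then G^1 can be generated through broadcasting from R and S if and only if r = 1 and s = 1, i.e., if and only if R and S are sharp. -/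

import Mathlib

open Kronecker Matrix
open scoped ComplexOrder

noncomputable section

/-- A linear map between matrix algebras is completely positive if it maps positive
semidefinite block matrices (with any finite number of blocks) to positive semidefinite
block matrices, blockwise. -/
def IsCPMap {m n : Type} [Fintype m] [DecidableEq m] [Fintype n] [DecidableEq n]
    (Φ : Matrix m m ℂ →ₗ[ℂ] Matrix n n ℂ) : Prop :=
  ∀ (k : ℕ) (A : Matrix (Fin k × m) (Fin k × m) ℂ), A.PosSemidef →
    (Matrix.of fun (p q : Fin k × n) =>
      Φ (Matrix.of fun a b => A (p.1, a) (q.1, b)) p.2 q.2).PosSemidef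

/-- A quantum channel: a trace-preserving completely positive linear map. -/
def IsChannel {m n : Type} [Fintype m] [DecidableEq m] [Fintype n] [DecidableEq n]
    (Φ : Matrix m m ℂ →ₗ[ℂ] Matrix n n ℂ) : Prop :=
  IsCPMap Φ ∧ ∀ ρ : Matrix m m ℂ, (Φ ρ).trace = ρ.trace

/-- A POVM with finite outcome set `X`: positive semidefinite effects summing to the identity. -/
def IsPOVM {X : Type} [Fintype X] {m : Type} [Fintype m] [DecidableEq m]
    (M : X → Matrix m m ℂ) : Prop :=
  (∀ x, (M x).PosSemidef) ∧ ∑ x, M x = 1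

/-- A PVM: a POVM all of whose effects are orthogonal projections. -/
def IsPVM {X : Type} [Fintype X] {m : Type} [Fintype m] [DecidableEq m]
    (M : X → Matrix m m ℂ) : Prop :=
  IsPOVM M ∧ ∀ x, (M x)ᴴ = M x ∧ M x * M x = M x

/-- `G` is generated through broadcasting from `M` and `N` if there is a channel `Φ`
such that `tr[Φ(ρ)(M x ⊗ N y)] = tr[ρ G x y]` for all `ρ, x, y`. -/
def GenByBroadcast {X Y : Type} [Fintype X] [Fintype Y]
    {d m n : Type} [Fintype d] [DecidableEq d] [Fintype m] [DecidableEq m]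
    [Fintype n] [DecidableEq n]
    (M : X → Matrix m m ℂ) (N : Y → Matrix n n ℂ)
    (G : X → Y → Matrix d d ℂ) : Prop :=
  ∃ Φ : Matrix d d ℂ →ₗ[ℂ] Matrix (m × n) (m × n) ℂ, IsChannel Φ ∧
    ∀ (ρ : Matrix d d ℂ) (x : X) (y : Y),
      (Φ ρ * (M x ⊗ₖ N y)).trace = (ρ * G x y).trace

/-- The Pauli matrix `σ_x`. -/
def pauliX : Matrix (Fin 2) (Fin 2) ℂ := !![0, 1; 1, 0]

/-- The Pauli matrix `σ_y`. -/
def pauliY : Matrix (Fin 2) (Fin 2) ℂ := !![0, -Complex.I; Complex.I, 0]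

/-- The Pauli matrix `σ_z`. -/
def pauliZ : Matrix (Fin 2) (Fin 2) ℂ := !![1, 0; 0, -1]

/-- `a⃗ · σ⃗` for a Bloch vector `a⃗ ∈ ℝ³`. -/
def blochOp (a : EuclideanSpace ℝ (Fin 3)) : Matrix (Fin 2) (Fin 2) ℂ :=
  a 0 • pauliX + a 1 • pauliY + a 2 • pauliZ

/-- The unbiased qubit observable with Bloch vector `a⃗`: the binary POVM
`σ ↦ ½(I + σ a⃗·σ⃗)`, indexed by the signs `σ ∈ ℤˣ = {+1, −1}`. -/
def unbiasedObs (a : EuclideanSpace ℝ (Fin 3)) (σ : ℤˣ) : Matrix (Fin 2) (Fin 2) ℂ :=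
  (1 / 2 : ℝ) • ((1 : Matrix (Fin 2) (Fin 2) ℂ) + ((σ : ℤ) : ℝ) • blochOp a)

/-- The Bloch vectors of the (scaled) tetrahedral informationally complete qubit POVM:
`a⃗_{σ,τ} = (g/√3)(σ, στ, τ)`, i.e. `a⃗_{+,+} = (g/√3)(1,1,1)`, `a⃗_{+,−} = (g/√3)(1,−1,−1)`,
`a⃗_{−,+} = (g/√3)(−1,−1,1)` and `a⃗_{−,−} = (g/√3)(−1,1,−1)`. -/
def tetraVec (g : ℝ) (σ τ : ℤˣ) : EuclideanSpace ℝ (Fin 3) :=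
  (g / Real.sqrt 3) •
    (WithLp.equiv 2 (Fin 3 → ℝ)).symm
      ![((σ : ℤ) : ℝ), ((σ : ℤ) : ℝ) * ((τ : ℤ) : ℝ), ((τ : ℤ) : ℝ)]

/-! ### Auxiliary lemmas -/

set_option linter.unusedSectionVars false
set_option maxHeartbeats 1000000

section Aux

variable {m n : Type} [Fintype m] [DecidableEq m] [Fintype n] [DecidableEq n]

lemma posSemidef_iff_eq_transpose_mul_self {A : Matrix m m ℂ} :
    A.PosSemidef ↔ ∃ B : Matrix m m ℂ, A = Bᴴ * B := by
  open scoped MatrixOrder Matrix.Norms.L2Operator in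
  refine ⟨fun hA => ?_, fun ⟨B, hB⟩ => hB ▸ posSemidef_conjTranspose_mul_self B⟩
  obtain ⟨B, hB⟩ := CStarAlgebra.nonneg_iff_eq_star_mul_self.mp hA.nonneg
  exact ⟨B, hB⟩

lemma kron_conjT {l p : Type} [Fintype l] [Fintype p] (A : Matrix l m ℂ) (B : Matrix p n ℂ) :
    (A ⊗ₖ B)ᴴ = Aᴴ ⊗ₖ Bᴴ := by
  ext ⟨i, j⟩ ⟨k, l⟩
  simp [conjTranspose_apply, kroneckerMap_apply]

lemma psd_kron {A : Matrix m m ℂ} {B : Matrix n n ℂ}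
    (hA : A.PosSemidef) (hB : B.PosSemidef) : (A ⊗ₖ B).PosSemidef := by
  obtain ⟨C, rfl⟩ := posSemidef_iff_eq_transpose_mul_self.mp hA
  obtain ⟨D, rfl⟩ := posSemidef_iff_eq_transpose_mul_self.mp hB
  rw [Matrix.mul_kronecker_mul, ← kron_conjT]
  exact posSemidef_conjTranspose_mul_self _

lemma psd_trace_nonneg {A : Matrix m m ℂ} (hA : A.PosSemidef) : 0 ≤ A.trace := by
  refine Finset.sum_nonneg fun i _ => ?_
  have := hA.dotProduct_mulVec_nonneg (Pi.single i 1)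
  simpa [dotProduct, Matrix.mulVec, Pi.single_apply] using this

lemma psd_trace_mul_nonneg {A B : Matrix m m ℂ} (hA : A.PosSemidef) (hB : B.PosSemidef) :
    0 ≤ (A * B).trace := by
  obtain ⟨C, rfl⟩ := posSemidef_iff_eq_transpose_mul_self.mp hB
  rw [← Matrix.mul_assoc, Matrix.trace_mul_cycle]
  exact psd_trace_nonneg (hA.mul_mul_conjTranspose_same C)

lemma psd_sum {ι : Type} [Fintype ι] (f : ι → Matrix m m ℂ) (h : ∀ e, (f e).PosSemidef) :
    (∑ e, f e).PosSemidef := by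
  classical
  exact Finset.sum_induction f _ (fun a b ha hb => ha.add hb) Matrix.PosSemidef.zero
    (fun e _ => h e)

lemma IsCPMap.psd {Φ : Matrix m m ℂ →ₗ[ℂ] Matrix n n ℂ} (hΦ : IsCPMap Φ)
    {ρ : Matrix m m ℂ} (hρ : ρ.PosSemidef) : (Φ ρ).PosSemidef := by
  have h := hΦ 1 (ρ.submatrix Prod.snd Prod.snd) (hρ.submatrix _)
  have h2 := h.submatrix (fun i : n => ((0 : Fin 1), i))
  convert h2 using 2
  ext i j
  rfl

lemma trace_block_psd {ι : Type} [Fintype ι] [DecidableEq ι]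
    {A : Matrix (ι × m) (ι × m) ℂ} (hA : A.PosSemidef)
    {G : Matrix m m ℂ} (hG : G.PosSemidef) :
    (Matrix.of fun p q : ι => ∑ a, ∑ c, A (p, a) (q, c) * G c a).PosSemidef := by
  obtain ⟨M, rfl⟩ := posSemidef_iff_eq_transpose_mul_self.mp hG
  have key : (Matrix.of fun p q : ι => ∑ a, ∑ c, A (p, a) (q, c) * (Mᴴ * M) c a)
      = ∑ e : m, (Matrix.of fun (p : ι) (qa : ι × m) =>
          if p = qa.1 then M e qa.2 else 0) * A *
          (Matrix.of fun (p : ι) (qa : ι × m) => if p = qa.1 then M e qa.2 else 0)ᴴ := by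
    ext p q
    simp only [Matrix.sum_apply, Matrix.mul_apply, Matrix.conjTranspose_apply, of_apply,
      Fintype.sum_prod_type, mul_apply, ite_mul, zero_mul, mul_ite, mul_zero,
      Finset.sum_ite_eq, Finset.mem_univ, if_true]
    simp only [apply_ite (star : ℂ → ℂ), star_zero, mul_ite, mul_zero,
      Finset.sum_ite_eq, Finset.mem_univ, if_true, Finset.sum_mul, Finset.mul_sum]
    simp only [ite_mul, zero_mul, Finset.sum_ite_irrel, Finset.sum_const_zero,
      Finset.sum_ite_eq, Finset.mem_univ, if_true]
    have L : (∑ x : m × m × m, A (p, x.1) (q, x.2.1) * (star (M x.2.2 x.2.1) * M x.2.2 x.1))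
        = ∑ x : m, ∑ x_1 : m, ∑ i : m, A (p, x) (q, x_1) * (star (M i x_1) * M i x) := by
      rw [Fintype.sum_prod_type]
      exact Finset.sum_congr rfl fun a _ => Fintype.sum_prod_type _
    have R : (∑ x : m × m × m, M x.1 x.2.2 * A (p, x.2.2) (q, x.2.1) * star (M x.1 x.2.1))
        = ∑ x : m, ∑ x_2 : m, ∑ i : m, M x i * A (p, i) (q, x_2) * star (M x x_2) := by
      rw [Fintype.sum_prod_type]
      exact Finset.sum_congr rfl fun a _ => Fintype.sum_prod_type _
    rw [← L, ← R]
    refine Fintype.sum_equiv ⟨fun z => (z.2.2, z.2.1, z.1), fun z => (z.2.2, z.2.1, z.1),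
      fun _ => rfl, fun _ => rfl⟩ _ _ fun x => ?_
    simp only [Equiv.coe_fn_mk]
    ring
  rw [key]
  exact psd_sum _ fun e => hA.mul_mul_conjTranspose_same _

/-- The measure-and-prepare map `ρ ↦ ∑ z tr[ρ G z] • K z`. -/
def mpMap {ι : Type} [Fintype ι] (G : ι → Matrix m m ℂ) (K : ι → Matrix n n ℂ) :
    Matrix m m ℂ →ₗ[ℂ] Matrix n n ℂ where
  toFun ρ := ∑ z, (ρ * G z).trace • K z
  map_add' ρ σ := by
    simp [Matrix.add_mul, add_smul, Finset.sum_add_distrib]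
  map_smul' c ρ := by
    simp [Matrix.smul_mul, Finset.smul_sum, smul_smul]

lemma mpMap_isCP {ι : Type} [Fintype ι] (G : ι → Matrix m m ℂ) (K : ι → Matrix n n ℂ)
    (hG : ∀ z, (G z).PosSemidef) (hK : ∀ z, (K z).PosSemidef) : IsCPMap (mpMap G K) := by
  intro k A hA
  have key : (Matrix.of fun (p q : Fin k × n) =>
      mpMap G K (Matrix.of fun a b => A (p.1, a) (q.1, b)) p.2 q.2)
      = ∑ z, (Matrix.of fun p q : Fin k => ∑ a, ∑ c, A (p, a) (q, c) * (G z) c a) ⊗ₖ K z := by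
    ext ⟨p, i⟩ ⟨q, j⟩
    simp [mpMap, Matrix.sum_apply, kroneckerMap_apply, Matrix.trace, Matrix.diag,
      Matrix.mul_apply, Finset.sum_mul, smul_eq_mul]
  rw [key]
  exact psd_sum _ fun z => psd_kron (trace_block_psd hA (hG z)) (hK z)

end Aux

/-! ### Qubit computations -/

lemma tetraVec_apply (g : ℝ) (σ τ : ℤˣ) (i : Fin 3) :
    tetraVec g σ τ i = (g / Real.sqrt 3) *
      ![((σ : ℤ) : ℝ), ((σ : ℤ) : ℝ) * ((τ : ℤ) : ℝ), ((τ : ℤ) : ℝ)] i := by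
  simp [tetraVec, PiLp.smul_apply, WithLp.equiv_symm_apply]

lemma blochOp_smul (c : ℝ) (a : EuclideanSpace ℝ (Fin 3)) :
    blochOp (c • a) = c • blochOp a := by
  simp only [blochOp, PiLp.smul_apply, smul_eq_mul, smul_add, mul_smul]

lemma unbiasedObs_eq (a : EuclideanSpace ℝ (Fin 3)) (σ : ℤˣ) :
    unbiasedObs a σ = (1/2 : ℝ) • ((1 : Matrix (Fin 2) (Fin 2) ℂ)
      + blochOp ((((σ : ℤ) : ℝ)) • a)) := by
  rw [unbiasedObs, blochOp_smul]

lemma smul_one_add_blochOp (c : ℝ) (u : EuclideanSpace ℝ (Fin 3)) :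
    c • ((1 : Matrix (Fin 2) (Fin 2) ℂ) + blochOp u) =
      !![(c : ℂ) * (1 + u 2), (c : ℂ) * (u 0 - u 1 * Complex.I);
         (c : ℂ) * (u 0 + u 1 * Complex.I), (c : ℂ) * (1 - u 2)] := by
  ext i j
  fin_cases i <;> fin_cases j <;>
    simp [blochOp, pauliX, pauliY, pauliZ, Matrix.one_apply, Complex.real_smul] <;> ring

lemma quadform_fin_two (M : Matrix (Fin 2) (Fin 2) ℂ) (x : Fin 2 → ℂ) :
    star x ⬝ᵥ M *ᵥ x = (starRingEnd ℂ) (x 0) * (M 0 0 * x 0 + M 0 1 * x 1)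
      + (starRingEnd ℂ) (x 1) * (M 1 0 * x 0 + M 1 1 * x 1) := by
  simp [dotProduct, Matrix.mulVec, Fin.sum_univ_two, mul_comm]

lemma quad_abs (u0 u1 u2 p q α β : ℝ) (hu : u0^2+u1^2+u2^2 ≤ 1) (hp : 0 ≤ p) (hq : 0 ≤ q)
    (hpq : α^2 + β^2 ≤ p*q) :
    0 ≤ (1+u2)*p + (1-u2)*q + 2*u0*α + 2*u1*β := by
  nlinarith [sq_nonneg (u0*β - u1*α), sq_nonneg (u0*(p-q) - 2*u2*α), sq_nonneg (u1*(p-q) - 2*u2*β),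
    sq_nonneg (p+q+u2*(p-q)+2*u0*α+2*u1*β), mul_nonneg hp hq, sq_nonneg (p+q), sq_nonneg (p-q),
    mul_nonneg (mul_nonneg hp hq) (add_nonneg hp hq)]

lemma bloch_psd (u : EuclideanSpace ℝ (Fin 3)) (h : u 0 ^ 2 + u 1 ^ 2 + u 2 ^ 2 ≤ 1)
    (c : ℝ) (hc : 0 ≤ c) :
    (c • ((1 : Matrix (Fin 2) (Fin 2) ℂ) + blochOp u)).PosSemidef := by
  rw [smul_one_add_blochOp]
  refine Matrix.PosSemidef.of_dotProduct_mulVec_nonneg ?_ ?_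
  · ext i j
    fin_cases i <;> fin_cases j <;> simp [conjTranspose_apply, Complex.ext_iff]
  · intro x
    rw [quadform_fin_two]
    set e := (x 0).re with he; set f := (x 0).im with hf
    set g := (x 1).re with hg; set hh := (x 1).im with hhh
    have hx0 : x 0 = Complex.mk e f := by simp [he, hf]
    have hx1 : x 1 = Complex.mk g hh := by simp [hg, hhh]
    have key : (starRingEnd ℂ) (x 0) *
          (!![(c : ℂ) * (1 + u 2), (c : ℂ) * (u 0 - u 1 * Complex.I);
             (c : ℂ) * (u 0 + u 1 * Complex.I), (c : ℂ) * (1 - u 2)] 0 0 * x 0 +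
           !![(c : ℂ) * (1 + u 2), (c : ℂ) * (u 0 - u 1 * Complex.I);
             (c : ℂ) * (u 0 + u 1 * Complex.I), (c : ℂ) * (1 - u 2)] 0 1 * x 1)
        + (starRingEnd ℂ) (x 1) *
          (!![(c : ℂ) * (1 + u 2), (c : ℂ) * (u 0 - u 1 * Complex.I);
             (c : ℂ) * (u 0 + u 1 * Complex.I), (c : ℂ) * (1 - u 2)] 1 0 * x 0 +
           !![(c : ℂ) * (1 + u 2), (c : ℂ) * (u 0 - u 1 * Complex.I);
             (c : ℂ) * (u 0 + u 1 * Complex.I), (c : ℂ) * (1 - u 2)] 1 1 * x 1)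
        = ((c * ((1 + u 2) * (e^2 + f^2) + (1 - u 2) * (g^2 + hh^2)
            + 2 * u 0 * (e*g + f*hh) + 2 * u 1 * (e*hh - f*g)) : ℝ) : ℂ) := by
      rw [hx0, hx1]
      apply Complex.ext <;>
        simp [Complex.ext_iff, Complex.mul_re, Complex.mul_im, Complex.add_re, Complex.add_im,
          ← Complex.ofReal_pow] <;>
        ring
    rw [key]
    rw [Complex.zero_le_real]
    apply mul_nonneg hc
    exact quad_abs (u 0) (u 1) (u 2) (e^2+f^2) (g^2+hh^2) (e*g+f*hh) (e*hh-f*g) h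
      (by positivity) (by positivity) (by nlinarith [sq_nonneg (e*hh - f*g)])

lemma sum_units {M : Type} [AddCommMonoid M] (f : ℤˣ → M) :
    ∑ σ : ℤˣ, f σ = f 1 + f (-1) := by
  rw [show (Finset.univ : Finset ℤˣ) = {1, -1} by decide]
  simp

lemma unbiased_trace (a : EuclideanSpace ℝ (Fin 3)) (σ : ℤˣ) :
    (unbiasedObs a σ).trace = 1 := by
  simp [unbiasedObs, blochOp, pauliX, pauliY, pauliZ, Matrix.trace_fin_two, Complex.real_smul,
    Matrix.one_apply]

lemma unbiased_mul_trace (a : EuclideanSpace ℝ (Fin 3)) (σ τ : ℤˣ) :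
    (unbiasedObs a σ * unbiasedObs a τ).trace =
      (((1 + ((σ : ℤ) : ℝ) * ((τ : ℤ) : ℝ) * (a 0 ^ 2 + a 1 ^ 2 + a 2 ^ 2)) / 2 : ℝ) : ℂ) := by
  simp only [unbiasedObs, Matrix.trace_fin_two, Matrix.mul_apply, Fin.sum_univ_two,
    Matrix.smul_apply, Matrix.add_apply, Matrix.one_apply, blochOp, pauliX, pauliY, pauliZ,
    Complex.real_smul]
  norm_num [Complex.ext_iff, Complex.mul_re, Complex.mul_im, ← Complex.ofReal_pow]
  constructor <;> ring

lemma sumG : ∑ z : ℤˣ × ℤˣ, ((1/4 : ℝ) • ((1 : Matrix (Fin 2) (Fin 2) ℂ)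
    + blochOp (tetraVec 1 z.1 z.2))) = 1 := by
  rw [Fintype.sum_prod_type, sum_units, sum_units, sum_units]
  ext i j
  fin_cases i <;> fin_cases j <;>
    simp [blochOp, tetraVec_apply, pauliX, pauliY, pauliZ, Matrix.one_apply,
      Complex.real_smul, Complex.ext_iff] <;> ring

lemma units_sq (σ : ℤˣ) : ((σ : ℤ) : ℝ) ^ 2 = 1 := by
  rcases Int.units_eq_one_or σ with rfl | rfl <;> norm_num

lemma norm_sq_eq (a : EuclideanSpace ℝ (Fin 3)) {r : ℝ} (hr : 0 ≤ r) (ha : ‖a‖ = r) :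
    a 0 ^ 2 + a 1 ^ 2 + a 2 ^ 2 = r ^ 2 := by
  have h1 : ‖a‖ ^ 2 = r ^ 2 := by rw [ha]
  rw [EuclideanSpace.norm_eq] at h1
  rw [Real.sq_sqrt (by positivity)] at h1
  simpa [Fin.sum_univ_three, Real.norm_eq_abs, sq_abs] using h1


lemma norm_scale_le (x y z c : ℝ) (h : c^2 * (x^2+y^2+z^2) = 1) :
    (c*x)^2 + (c*y)^2 + (c*z)^2 ≤ 1 := by nlinarith

lemma sharp_arith (r s t u w vv : ℝ) (hr0 : 0 < r) (hr1 : r ≤ 1) (hs0 : 0 < s) (hs1 : s ≤ 1)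
    (ht3 : t^2 = 3) (ht0 : 0 < t) (hu : u = 1/(t*r)) (hw : w = 1/(t*r*s)) (hvv : vv = 1/(t*s))
    (hx : 0 ≤ (1+vv)*((1+vv)*(1-vv) - u^2 - w^2)/4) : r = 1 ∧ s = 1 := by
  have hvpos : 0 < vv := by rw [hvv]; positivity
  have h2 : u^2 + w^2 + vv^2 ≤ 1 := by nlinarith [hx, hvpos]
  have hu2 : u^2 = 1/(3*r^2) := by rw [hu, div_pow, mul_pow, ht3]; norm_num
  have hw2 : w^2 = 1/(3*r^2*s^2) := by rw [hw, div_pow, mul_pow, mul_pow, ht3]; norm_num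
  have hv2 : vv^2 = 1/(3*s^2) := by rw [hvv, div_pow, mul_pow, ht3]; norm_num
  rw [hu2, hw2, hv2] at h2
  have h3 : r^2 + s^2 + 1 ≤ 3*(r^2*s^2) := by
    have e1 : (1/(3*r^2) + 1/(3*r^2*s^2) + 1/(3*s^2)) * (3*r^2*s^2)
        = s^2 + 1 + r^2 := by field_simp
    have e2 := mul_le_mul_of_nonneg_right h2 (by positivity : (0:ℝ) ≤ 3*r^2*s^2)
    rw [e1, one_mul] at e2
    linarith
  have h1r : 0 ≤ 1 - r^2 := by nlinarith
  have h1s : 0 ≤ 1 - s^2 := by nlinarith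
  have hA : 0 ≤ r^2 * (1 - s^2) := mul_nonneg (sq_nonneg r) h1s
  have hB : 0 ≤ s^2 * (1 - r^2) := mul_nonneg (sq_nonneg s) h1r
  have hC : 0 ≤ 1 - r^2*s^2 := by nlinarith [h1r, h1s, sq_nonneg r, sq_nonneg s]
  have hsum : r^2 * (1 - s^2) + s^2 * (1 - r^2) + (1 - r^2*s^2) ≤ 0 := by nlinarith [h3]
  have er : r^2 * (1 - s^2) = 0 := le_antisymm (by linarith) hA
  have es : s^2 * (1 - r^2) = 0 := le_antisymm (by linarith) hB
  constructor
  · have h' : 1 - r^2 = 0 := by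
      rcases mul_eq_zero.mp es with h' | h'
      · nlinarith [hs0]
      · exact h'
    nlinarith [hr0]
  · have h' : 1 - s^2 = 0 := by
      rcases mul_eq_zero.mp er with h' | h'
      · nlinarith [hr0]
      · exact h'
    nlinarith [hs0]
theorem rev_dir (a b : EuclideanSpace ℝ (Fin 3)) (ha : ‖a‖ = 1) (hb : ‖b‖ = 1) :
    GenByBroadcast (unbiasedObs a) (unbiasedObs b)
      (fun σ τ => (1 / 4 : ℝ) • ((1 : Matrix (Fin 2) (Fin 2) ℂ) + blochOp (tetraVec 1 σ τ))) := by
  have hna : a 0 ^ 2 + a 1 ^ 2 + a 2 ^ 2 = 1 := by simpa using norm_sq_eq a zero_le_one ha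
  have hnb : b 0 ^ 2 + b 1 ^ 2 + b 2 ^ 2 = 1 := by simpa using norm_sq_eq b zero_le_one hb
  set Gf : ℤˣ × ℤˣ → Matrix (Fin 2) (Fin 2) ℂ :=
    fun z => (1/4 : ℝ) • ((1 : Matrix (Fin 2) (Fin 2) ℂ) + blochOp (tetraVec 1 z.1 z.2))
    with hGf
  set Kf : ℤˣ × ℤˣ → Matrix (Fin 2 × Fin 2) (Fin 2 × Fin 2) ℂ :=
    fun z => unbiasedObs a z.1 ⊗ₖ unbiasedObs b z.2 with hKf
  have ht3 : Real.sqrt 3 ^ 2 = 3 := Real.sq_sqrt (by norm_num)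
  have hGpsd : ∀ z : ℤˣ × ℤˣ, (Gf z).PosSemidef := by
    intro z
    refine bloch_psd _ ?_ _ (by norm_num)
    simp only [tetraVec_apply]
    have h0 := units_sq z.1
    have h1 := units_sq z.2
    simp only [Matrix.cons_val_zero, Matrix.cons_val_one, Matrix.head_cons,
      Matrix.cons_val_two, Matrix.tail_cons]
    have hs3 : Real.sqrt 3 ≠ 0 := by positivity
    field_simp
    nlinarith [h0, h1, ht3]
  have hobs_psd : ∀ (c : EuclideanSpace ℝ (Fin 3)), ‖c‖ = 1 → ∀ σ : ℤˣ,
      (unbiasedObs c σ).PosSemidef := by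
    intro c hc σ
    rw [unbiasedObs_eq]
    refine bloch_psd _ ?_ _ (by norm_num)
    have hnc : c 0 ^ 2 + c 1 ^ 2 + c 2 ^ 2 = 1 := by simpa using norm_sq_eq c zero_le_one hc
    simp only [PiLp.smul_apply, smul_eq_mul]
    nlinarith [units_sq σ, hnc]
  have hKpsd : ∀ z : ℤˣ × ℤˣ, (Kf z).PosSemidef :=
    fun z => psd_kron (hobs_psd a ha z.1) (hobs_psd b hb z.2)
  have horth : ∀ (c : EuclideanSpace ℝ (Fin 3)), ‖c‖ = 1 → ∀ σ τ : ℤˣ,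
      (unbiasedObs c σ * unbiasedObs c τ).trace = if σ = τ then 1 else 0 := by
    intro c hc σ τ
    rw [unbiased_mul_trace, norm_sq_eq c zero_le_one hc]
    rcases Int.units_eq_one_or σ with rfl | rfl <;> rcases Int.units_eq_one_or τ with rfl | rfl <;>
      norm_num <;> decide
  refine ⟨mpMap Gf Kf, ⟨mpMap_isCP _ _ hGpsd hKpsd, ?_⟩, ?_⟩
  · intro ρ
    show (∑ z, (ρ * Gf z).trace • Kf z).trace = ρ.trace
    rw [Matrix.trace_sum]
    simp only [Matrix.trace_smul, smul_eq_mul, hKf, Matrix.trace_kronecker,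
      unbiased_trace, one_mul, mul_one]
    rw [← Matrix.trace_sum, ← Matrix.mul_sum]
    rw [hGf]
    rw [sumG, Matrix.mul_one]
  · intro ρ x y
    show ((∑ z, (ρ * Gf z).trace • Kf z) * (unbiasedObs a x ⊗ₖ unbiasedObs b y)).trace = _
    rw [Matrix.sum_mul, Matrix.trace_sum]
    simp only [Matrix.smul_mul, Matrix.trace_smul, smul_eq_mul, hKf,
      ← Matrix.mul_kronecker_mul, Matrix.trace_kronecker, horth a ha, horth b hb]
    rw [Fintype.sum_prod_type]
    simp only [mul_ite, ite_mul, mul_one, mul_zero, one_mul, zero_mul,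
      Finset.sum_ite_irrel, Finset.sum_const_zero, Finset.sum_ite_eq', Finset.mem_univ, if_true]
    rfl

theorem fwd_dir (r s : ℝ) (hr : r ∈ Set.Ioc (0 : ℝ) 1) (hs : s ∈ Set.Ioc (0 : ℝ) 1)
    (a b : EuclideanSpace ℝ (Fin 3)) (ha : ‖a‖ = r) (hb : ‖b‖ = s)
    (h : GenByBroadcast (unbiasedObs a) (unbiasedObs b)
      (fun σ τ => (1 / 4 : ℝ) • ((1 : Matrix (Fin 2) (Fin 2) ℂ) + blochOp (tetraVec 1 σ τ)))) :
    r = 1 ∧ s = 1 := by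
  obtain ⟨hr0, hr1⟩ := hr
  obtain ⟨hs0, hs1⟩ := hs
  obtain ⟨Φ, ⟨hCP, _⟩, hd⟩ := h
  have ht3 : Real.sqrt 3 ^ 2 = 3 := Real.sq_sqrt (by norm_num)
  have ht0 : (0:ℝ) < Real.sqrt 3 := by positivity
  have hna : a 0 ^ 2 + a 1 ^ 2 + a 2 ^ 2 = r ^ 2 := norm_sq_eq a hr0.le ha
  have hnb : b 0 ^ 2 + b 1 ^ 2 + b 2 ^ 2 = s ^ 2 := norm_sq_eq b hs0.le hb
  -- the effects P = (I + Â·σ)/2, Q = (I + B̂·σ)/2 with normalized Bloch vectors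
  set P : Matrix (Fin 2) (Fin 2) ℂ :=
    (1/2 : ℝ) • ((1 : Matrix (Fin 2) (Fin 2) ℂ) + blochOp (r⁻¹ • a)) with hPdef
  set Q : Matrix (Fin 2) (Fin 2) ℂ :=
    (1/2 : ℝ) • ((1 : Matrix (Fin 2) (Fin 2) ℂ) + blochOp (s⁻¹ • b)) with hQdef
  have hP : P.PosSemidef := by
    refine bloch_psd _ ?_ _ (by norm_num)
    simp only [PiLp.smul_apply, smul_eq_mul]
    have h1 : r⁻¹ ^ 2 * (a 0 ^ 2 + a 1 ^ 2 + a 2 ^ 2) = 1 := by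
      rw [hna]; field_simp
    exact norm_scale_le _ _ _ _ h1
  have hQ : Q.PosSemidef := by
    refine bloch_psd _ ?_ _ (by norm_num)
    simp only [PiLp.smul_apply, smul_eq_mul]
    have h1 : s⁻¹ ^ 2 * (b 0 ^ 2 + b 1 ^ 2 + b 2 ^ 2) = 1 := by
      rw [hnb]; field_simp
    exact norm_scale_le _ _ _ _ h1
  -- coefficients
  set c1 : ℝ := (1 + 1/r)/2 with hc1
  set c2 : ℝ := (1 - 1/r)/2 with hc2
  set d1 : ℝ := (1 + 1/s)/2 with hd1
  set d2 : ℝ := (1 - 1/s)/2 with hd2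
  have hrne : (r : ℂ) ≠ 0 := Complex.ofReal_ne_zero.mpr hr0.ne'
  have hsne : (s : ℂ) ≠ 0 := Complex.ofReal_ne_zero.mpr hs0.ne'
  have hPsum : P = c1 • unbiasedObs a 1 + c2 • unbiasedObs a (-1) := by
    rw [hPdef, unbiasedObs, unbiasedObs, blochOp_smul]
    ext i j
    simp only [Matrix.smul_apply, Matrix.add_apply, Complex.real_smul, hc1, hc2]
    push_cast
    field_simp
    ring
  have hQsum : Q = d1 • unbiasedObs b 1 + d2 • unbiasedObs b (-1) := by
    rw [hQdef, unbiasedObs, unbiasedObs, blochOp_smul]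
    ext i j
    simp only [Matrix.smul_apply, Matrix.add_apply, Complex.real_smul, hd1, hd2]
    push_cast
    field_simp
    ring
  -- the observable combination H
  set Gm : ℤˣ → ℤˣ → Matrix (Fin 2) (Fin 2) ℂ :=
    fun σ τ => (1/4 : ℝ) • ((1 : Matrix (Fin 2) (Fin 2) ℂ) + blochOp (tetraVec 1 σ τ)) with hGm
  set H : Matrix (Fin 2) (Fin 2) ℂ :=
    c1 • (d1 • Gm 1 1) + c1 • (d2 • Gm 1 (-1)) + c2 • (d1 • Gm (-1) 1) + c2 • (d2 • Gm (-1) (-1))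
    with hH
  have hPQ : P ⊗ₖ Q = c1 • (d1 • (unbiasedObs a 1 ⊗ₖ unbiasedObs b 1))
      + c1 • (d2 • (unbiasedObs a 1 ⊗ₖ unbiasedObs b (-1)))
      + c2 • (d1 • (unbiasedObs a (-1) ⊗ₖ unbiasedObs b 1))
      + c2 • (d2 • (unbiasedObs a (-1) ⊗ₖ unbiasedObs b (-1))) := by
    rw [hPsum, hQsum]
    simp only [Matrix.add_kronecker, Matrix.kronecker_add, Matrix.smul_kronecker,
      Matrix.kronecker_smul]
    module
  -- the key positivity statement
  have key : ∀ x : Fin 2 → ℂ, 0 ≤ (Matrix.vecMulVec x (star x) * H).trace := by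
    intro x
    have hρ : (Matrix.vecMulVec x (star x)).PosSemidef := by
      have : Matrix.vecMulVec x (star x)
          = (Matrix.replicateRow (Fin 1) (star x))ᴴ * Matrix.replicateRow (Fin 1) (star x) := by
        ext i j
        simp [Matrix.vecMulVec_apply, Matrix.mul_apply, Matrix.replicateRow_apply,
          Matrix.conjTranspose_apply]
      rw [this]
      exact posSemidef_conjTranspose_mul_self _
    have h0 : 0 ≤ (Φ (Matrix.vecMulVec x (star x)) * (P ⊗ₖ Q)).trace :=
      psd_trace_mul_nonneg (hCP.psd hρ) (psd_kron hP hQ)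
    have htr : (Φ (Matrix.vecMulVec x (star x)) * (P ⊗ₖ Q)).trace
        = (Matrix.vecMulVec x (star x) * H).trace := by
      rw [hPQ, hH]
      simp only [Matrix.mul_add, Matrix.mul_smul, Matrix.trace_add, Matrix.trace_smul, hd, hGm]
    rwa [htr] at h0
  -- evaluate at the distinguished vector
  set t : ℝ := Real.sqrt 3 with htdef
  set u : ℝ := 1/(t*r) with hu
  set w : ℝ := 1/(t*r*s) with hw
  set vv : ℝ := 1/(t*s) with hvv
  have htne : (Real.sqrt 3 : ℂ) ≠ 0 := Complex.ofReal_ne_zero.mpr ht0.ne'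
  have hHeq : H = !![(1 + (vv : ℂ))/4, ((u : ℂ) - (w : ℂ) * Complex.I)/4;
      ((u : ℂ) + (w : ℂ) * Complex.I)/4, (1 - (vv : ℂ))/4] := by
    simp only [hH, hGm, hc1, hc2, hd1, hd2, hu, hw, hvv, htdef]
    ext i j
    fin_cases i <;> fin_cases j <;>
      · simp only [Matrix.smul_apply, Matrix.add_apply, Matrix.one_apply, blochOp,
          tetraVec_apply, pauliX, pauliY, pauliZ, Complex.real_smul,
          Matrix.cons_val', Matrix.cons_val_zero, Matrix.cons_val_one, Matrix.head_cons,
          Matrix.head_fin_const, Matrix.cons_val_fin_one, Matrix.empty_val',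
          Units.val_one, Units.val_neg, Int.cast_one, Int.cast_neg, Matrix.of_apply]
        push_cast
        field_simp
        ring
  have hx := key ![-((u : ℂ) - (w:ℂ) * Complex.I), ((1+vv : ℝ) : ℂ)]
  have hval : (Matrix.vecMulVec ![-((u : ℂ) - (w:ℂ) * Complex.I), ((1+vv : ℝ) : ℂ)]
        (star ![-((u : ℂ) - (w:ℂ) * Complex.I), ((1+vv : ℝ) : ℂ)]) * H).trace
      = (((1+vv) * ((1+vv) * (1-vv) - u^2 - w^2) / 4 : ℝ) : ℂ) := by
    rw [hHeq]
    simp only [Matrix.trace_fin_two, Matrix.mul_apply, Fin.sum_univ_two,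
      Matrix.vecMulVec_apply, Pi.star_apply, Matrix.cons_val_zero, Matrix.cons_val_one,
      Matrix.head_cons, RCLike.star_def, map_neg, map_sub, map_add, Complex.conj_ofReal,
      Complex.conj_I, _root_.map_mul]
    apply Complex.ext <;>
      simp [Complex.ext_iff, Complex.mul_re, Complex.mul_im, Complex.add_re, Complex.add_im,
        ← Complex.ofReal_pow] <;>
      ring
  rw [hval, Complex.zero_le_real] at hx
  exact sharp_arith r s t u w vv hr0 hr1 hs0 hs1 ht3 ht0 hu hw hvv hx

/-- the rank-1 informationally complete POVM `G^1` can be generated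
through broadcasting from unbiased qubit observables with sharpnesses `r` and `s` iff
`r = 1` and `s = 1`, i.e. iff both observables are sharp. -/
theorem statement5 (r s : ℝ) (hr : r ∈ Set.Ioc (0 : ℝ) 1) (hs : s ∈ Set.Ioc (0 : ℝ) 1)
    (a b : EuclideanSpace ℝ (Fin 3)) (ha : ‖a‖ = r) (hb : ‖b‖ = s) :
    GenByBroadcast (unbiasedObs a) (unbiasedObs b)
      (fun σ τ => (1 / 4 : ℝ) • ((1 : Matrix (Fin 2) (Fin 2) ℂ) + blochOp (tetraVec 1 σ τ))) ↔
    (r = 1 ∧ s = 1) := by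
  constructor
  · exact fwd_dir r s hr hs a b ha hb
  · rintro ⟨rfl, rfl⟩
    exact rev_dir a b ha hb
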